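/- Let w ≥ 2, l ≤ 0, u ≥ 1 with 2^{w-1} ≤ u − l + 1 < 2^w, and let h(n) denote the minimal Hamming weight over all representations n = Σ_{i=0}^{L} ε_i 2^i with digits ε_i ∈ {a ∈ ℤ : l ≤ a ≤ u}. Then h satisfies: h(0) = 0; h(2n) = h(n) for n ≠ 0; and for odd n, h(n) ≤ 1 + min over digits a ∈ D_{l,u} with a ≡ n (mod 2^{w-1}) of h((n − a)/2^{w-1}). -/

import Mathlib

def digitValue (l : List ℤ) : ℤ :=
  ∑ i ∈ Finset.range l.length, l.getD i 0 * 2 ^ i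

def hammingWeight (l : List ℤ) : ℕ := (l.filter (· ≠ 0)).length

lemma digitValue_nil : digitValue [] = 0 := by simp [digitValue]

lemma digitValue_cons (d : ℤ) (t : List ℤ) :
    digitValue (d :: t) = d + 2 * digitValue t := by
  unfold digitValue
  rw [List.length_cons, Finset.sum_range_succ']
  simp only [List.getD_cons_succ, List.getD_cons_zero, pow_zero, mul_one, pow_succ]
  rw [Finset.sum_congr rfl (fun i _ => by ring :
    ∀ i ∈ Finset.range t.length, t.getD i 0 * (2 ^ i * 2) = 2 * (t.getD i 0 * 2 ^ i)),
    ← Finset.mul_sum, add_comm]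

lemma hammingWeight_nil : hammingWeight [] = 0 := by simp [hammingWeight]

lemma hammingWeight_cons (d : ℤ) (t : List ℤ) :
    hammingWeight (d :: t) = (if d = 0 then 0 else 1) + hammingWeight t := by
  by_cases hd : d = 0 <;> simp [hammingWeight, List.filter_cons, hd] <;> omega

lemma digitValue_replicate_append (k : ℕ) (l : List ℤ) :
    digitValue (List.replicate k 0 ++ l) = 2 ^ k * digitValue l := by
  induction k with
  | zero => simp
  | succ k ih =>
      rw [List.replicate_succ, List.cons_append, digitValue_cons, ih]
      ring

lemma hammingWeight_replicate_append (k : ℕ) (l : List ℤ) :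
    hammingWeight (List.replicate k 0 ++ l) = hammingWeight l := by
  induction k with
  | zero => simp
  | succ k ih =>
      rw [List.replicate_succ, List.cons_append, hammingWeight_cons, ih]
      simp

lemma digitValue_neg (l : List ℤ) :
    digitValue (l.map (fun x => -x)) = - digitValue l := by
  induction l with
  | nil => simp [digitValue_nil]
  | cons d t ih =>
      rw [List.map_cons, digitValue_cons, digitValue_cons, ih]
      ring

lemma rep_natBin (n : ℕ) : ∃ l : List ℤ,
    (∀ d ∈ l, d = 0 ∨ d = 1) ∧ digitValue l = n := by
  induction n using Nat.strong_induction_on with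
  | _ n ih =>
    rcases Nat.eq_zero_or_pos n with rfl | hn
    · exact ⟨[], by simp, by simp [digitValue_nil]⟩
    · obtain ⟨l, hl, hv⟩ := ih (n / 2) (Nat.div_lt_self hn (by norm_num))
      refine ⟨(n % 2 : ℕ) :: l, ?_, ?_⟩
      · intro d hd
        rcases List.mem_cons.mp hd with rfl | hd
        · have := Nat.mod_two_eq_zero_or_one n
          rcases this with h | h <;> simp [h]
        · exact hl d hd
      · rw [digitValue_cons, hv]
        have := Nat.div_add_mod n 2
        push_cast
        omega

lemma exists_rep (ℓ u : ℤ) (hℓ : ℓ ≤ 0) (hu : 1 ≤ u) (n : ℤ)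
    (hg : ℓ = 0 → 0 ≤ n) :
    ∃ l : List ℤ, (∀ d ∈ l, ℓ ≤ d ∧ d ≤ u) ∧ digitValue l = n := by
  rcases le_or_gt 0 n with hn | hn
  · obtain ⟨l, hl, hv⟩ := rep_natBin n.toNat
    refine ⟨l, fun d hd => ?_, by rw [hv, Int.toNat_of_nonneg hn]⟩
    rcases hl d hd with rfl | rfl <;> constructor <;> omega
  · have hℓ1 : ℓ ≤ -1 := by
      rcases eq_or_lt_of_le hℓ with rfl | h
      · exact absurd (hg rfl) (by omega)
      · omega
    obtain ⟨l, hl, hv⟩ := rep_natBin (-n).toNat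
    refine ⟨l.map (fun x => -x), fun d hd => ?_, ?_⟩
    · obtain ⟨d', hd', rfl⟩ := List.mem_map.mp hd
      rcases hl d' hd' with rfl | rfl <;> constructor <;> omega
    · rw [digitValue_neg, hv, Int.toNat_of_nonneg (by omega)]
      ring

lemma carry_exists (ℓ u e d : ℤ) (hℓ : ℓ ≤ 0) (hu : 1 ≤ u)
    (he1 : ℓ ≤ e) (he2 : e ≤ u) (hd1 : ℓ ≤ d) (hd2 : d ≤ u) :
    ∃ r c : ℤ, ℓ ≤ r ∧ r ≤ u ∧ ℓ ≤ c ∧ c ≤ u ∧ r + 2 * c = e + d ∧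
      ((if r = 0 then 0 else 1) + (if c = 0 then 0 else 1) : ℕ) ≤
      (if e = 0 then 0 else 1) + (if d = 0 then 0 else 1) := by
  by_cases he : e = 0
  · exact ⟨d, 0, hd1, hd2, hℓ, by omega, by omega, by simp [he]⟩
  by_cases hd : d = 0
  · exact ⟨e, 0, he1, he2, hℓ, by omega, by omega, by simp [hd]⟩
  refine ⟨(e + d) % 2, (e + d) / 2, ?_, ?_, ?_, ?_, ?_, ?_⟩
  · have := Int.emod_two_eq (e + d); omega
  · have := Int.emod_two_eq (e + d); omega
  · rw [Int.le_ediv_iff_mul_le (by norm_num : (0:ℤ) < 2)]; omega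
  · have h1 : (e + d) / 2 ≤ (2 * u) / 2 :=
      Int.ediv_le_ediv (by norm_num) (by omega)
    rwa [Int.mul_ediv_cancel_left _ (by norm_num : (2:ℤ) ≠ 0)] at h1
  · have := Int.mul_ediv_add_emod (e + d) 2; omega
  · simp [he, hd]
    split <;> split <;> omega

lemma rep_add (ℓ u : ℤ) (hℓ : ℓ ≤ 0) (hu : 1 ≤ u) :
    ∀ t : List ℤ, (∀ d ∈ t, ℓ ≤ d ∧ d ≤ u) → ∀ e : ℤ, ℓ ≤ e → e ≤ u →
    ∃ l' : List ℤ, (∀ d ∈ l', ℓ ≤ d ∧ d ≤ u) ∧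
      digitValue l' = e + digitValue t ∧
      hammingWeight l' ≤ (if e = 0 then 0 else 1) + hammingWeight t := by
  intro t
  induction t with
  | nil =>
      intro _ e he1 he2
      refine ⟨[e], by simp [he1, he2], by simp [digitValue_cons, digitValue_nil], ?_⟩
      rw [hammingWeight_cons, hammingWeight_nil]
  | cons d t ih =>
      intro hval e he1 he2
      have hd := hval d List.mem_cons_self
      obtain ⟨r, c, hr1, hr2, hc1, hc2, hsum, hwt⟩ :=
        carry_exists ℓ u e d hℓ hu he1 he2 hd.1 hd.2
      obtain ⟨l'', hl''v, hl''d, hl''w⟩ :=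
        ih (fun x hx => hval x (List.mem_cons_of_mem d hx)) c hc1 hc2
      refine ⟨r :: l'', ?_, ?_, ?_⟩
      · intro x hx
        rcases List.mem_cons.mp hx with rfl | hx
        · exact ⟨hr1, hr2⟩
        · exact hl''v x hx
      · rw [digitValue_cons, hl''d, digitValue_cons]
        linarith
      · rw [hammingWeight_cons, hammingWeight_cons]
        omega

/-- Recursive properties of the minimal Hamming weight `h` over all
representations with digit set `D_{ℓ,u} = {a : ℓ ≤ a ≤ u}`. -/
theorem minimalWeight_recursion (w : ℕ) (ℓ u : ℤ) (hw : 2 ≤ w)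
    (hℓ : ℓ ≤ 0) (hu : 1 ≤ u)
    (hlow : (2 : ℤ) ^ (w - 1) ≤ u - ℓ + 1) (hhigh : u - ℓ + 1 < 2 ^ w)
    (h : ℤ → ℕ)
    (hdef : ∀ n : ℤ, h n = sInf {k : ℕ | ∃ l : List ℤ,
      (∀ d ∈ l, ℓ ≤ d ∧ d ≤ u) ∧ digitValue l = n ∧ hammingWeight l = k}) :
    h 0 = 0 ∧
    (∀ n : ℤ, n ≠ 0 → (ℓ = 0 → 0 ≤ n) → h (2 * n) = h n) ∧
    (∀ n : ℤ, Odd n → (ℓ = 0 → 0 ≤ n) →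
      ∀ a : ℤ, ℓ ≤ a → a ≤ u → a ≡ n [ZMOD ((2 : ℤ) ^ (w - 1))] →
        h n ≤ 1 + h ((n - a) / 2 ^ (w - 1))) := by
  -- helper: h m ≤ weight of any representation of m
  have hle : ∀ (m : ℤ) (l : List ℤ), (∀ d ∈ l, ℓ ≤ d ∧ d ≤ u) →
      digitValue l = m → h m ≤ hammingWeight l := by
    intro m l hv hd
    rw [hdef]
    exact Nat.sInf_le ⟨l, hv, hd, rfl⟩
  -- helper: a minimal representation exists
  have hmin : ∀ m : ℤ, (ℓ = 0 → 0 ≤ m) → ∃ l : List ℤ,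
      (∀ d ∈ l, ℓ ≤ d ∧ d ≤ u) ∧ digitValue l = m ∧ hammingWeight l = h m := by
    intro m hgm
    obtain ⟨l, hv, hd⟩ := exists_rep ℓ u hℓ hu m hgm
    have hne : Set.Nonempty {k : ℕ | ∃ l : List ℤ,
        (∀ d ∈ l, ℓ ≤ d ∧ d ≤ u) ∧ digitValue l = m ∧ hammingWeight l = k} :=
      ⟨hammingWeight l, l, hv, hd, rfl⟩
    rw [hdef m]
    exact Nat.sInf_mem hne
  refine ⟨?_, ?_, ?_⟩
  · -- h 0 = 0
    have := hle 0 [] (by simp) digitValue_nil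
    rw [hammingWeight_nil] at this
    omega
  · -- h (2 n) = h n
    intro n hn hg
    have hg2 : ℓ = 0 → 0 ≤ 2 * n := fun h0 => by have := hg h0; omega
    -- h (2n) ≤ h n
    obtain ⟨l, hv, hd, hwt⟩ := hmin n hg
    have h1 : h (2 * n) ≤ h n := by
      have := hle (2 * n) (0 :: l) ?_ ?_
      · rw [hammingWeight_cons, if_pos rfl] at this
        omega
      · intro d hd'
        rcases List.mem_cons.mp hd' with rfl | hd'
        · exact ⟨hℓ, by omega⟩
        · exact hv d hd'
      · rw [digitValue_cons, hd]; ring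
    -- h n ≤ h (2n)
    obtain ⟨l2, hv2, hd2, hwt2⟩ := hmin (2 * n) hg2
    have h2 : h n ≤ h (2 * n) := by
      match l2 with
      | [] =>
          rw [digitValue_nil] at hd2
          exact absurd (by omega : n = 0) hn
      | d :: t =>
          rw [digitValue_cons] at hd2
          have hdb := hv2 d List.mem_cons_self
          have hde : d = 2 * (n - digitValue t) := by omega
          set e : ℤ := n - digitValue t with he_def
          have he1 : ℓ ≤ e := by omega
          have he2 : e ≤ u := by omega
          obtain ⟨l', hl'v, hl'd, hl'w⟩ := rep_add ℓ u hℓ hu t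
            (fun x hx => hv2 x (List.mem_cons_of_mem d hx)) e he1 he2
          have hval : digitValue l' = n := by rw [hl'd]; omega
          have := hle n l' hl'v hval
          rw [hammingWeight_cons] at hwt2
          have he0 : e = 0 ↔ d = 0 := by omega
          have hwe : (if e = 0 then (0:ℕ) else 1) = if d = 0 then 0 else 1 := by
            by_cases h0 : e = 0
            · rw [if_pos h0, if_pos (he0.mp h0)]
            · rw [if_neg h0, if_neg (fun hd0 => h0 (he0.mpr hd0))]
          rw [hwe] at hl'w
          omega
    omega
  · -- odd case
    intro n hodd hg a ha1 ha2 hmod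
    have hN : (0:ℤ) < 2 ^ (w - 1) := by positivity
    have hdvd : (2:ℤ) ^ (w - 1) ∣ n - a := hmod.dvd
    set m : ℤ := (n - a) / 2 ^ (w - 1) with hm_def
    have hm : m * 2 ^ (w - 1) = n - a := Int.ediv_mul_cancel hdvd
    by_cases hcase : ℓ = 0 ∧ n < a
    · -- then n itself is a digit
      obtain ⟨hl0, hna⟩ := hcase
      have hn0 : 0 ≤ n := hg hl0
      have hdvd2 : (2:ℤ) ^ (w - 1) ∣ a - n := by
        have := dvd_neg.mpr hdvd
        rwa [neg_sub] at this
      have hge : (2:ℤ) ^ (w - 1) ≤ a - n := Int.le_of_dvd (by omega) hdvd2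
      have hnu : n ≤ u := by omega
      have hne : n ≠ 0 := by
        rintro rfl
        simp [Int.odd_iff] at hodd
      have := hle n [n] (by simp; omega) (by rw [digitValue_cons, digitValue_nil]; ring)
      rw [hammingWeight_cons, hammingWeight_nil, if_neg hne] at this
      omega
    · have hgm : ℓ = 0 → 0 ≤ m := by
        intro hl0
        have : ¬ n < a := fun hna => hcase ⟨hl0, hna⟩
        exact Int.ediv_nonneg (by omega) (le_of_lt hN)
      obtain ⟨l, hv, hd, hwt⟩ := hmin m hgm
      have hw2 : w - 1 = (w - 2) + 1 := by omega
      have hval : digitValue (a :: (List.replicate (w - 2) 0 ++ l)) = n := by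
        rw [digitValue_cons, digitValue_replicate_append, hd]
        have h2 : (2:ℤ) ^ (w - 1) = 2 ^ (w - 2) * 2 := by rw [hw2, pow_succ]
        rw [h2] at hm
        linear_combination hm
      have hvalid : ∀ d ∈ a :: (List.replicate (w - 2) 0 ++ l), ℓ ≤ d ∧ d ≤ u := by
        intro x hx
        rcases List.mem_cons.mp hx with rfl | hx
        · exact ⟨ha1, ha2⟩
        · rcases List.mem_append.mp hx with hx | hx
          · have : x = 0 := List.eq_of_mem_replicate hx
            subst this; exact ⟨hℓ, by omega⟩
          · exact hv x hx
      have := hle n _ hvalid hval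
      rw [hammingWeight_cons, hammingWeight_replicate_append, hwt] at this
      split at this <;> omega
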